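/- Let j ≥ 2, m ≥ 1 and k ≥ 1 be integers and set N = 2mj^k. Then the first N consecutive positive integers 1, 2, …, N can be partitioned into j pairwise disjoint sets, each containing exactly 2mj^{k−1} integers, such that for every exponent r = 1, 2, …, k the sum of the r-th powers of the members of each set is the same for all j sets. -/

import Mathlib

open Finset


/-- An integer lies in at most one block `[a*n+1, (a+1)*n]`. -/
lemma block_unique {n x a b : ℤ} (hn : 0 < n)
    (ha1 : a*n+1 ≤ x) (ha2 : x ≤ (a+1)*n) (hb1 : b*n+1 ≤ x) (hb2 : x ≤ (b+1)*n) :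
    a = b := by
  by_contra h
  rcases lt_or_gt_of_ne h with h | h
  · have h1 : a + 1 ≤ b := by omega
    nlinarith [mul_le_mul_of_nonneg_right h1 hn.le]
  · have h1 : b + 1 ≤ a := by omega
    nlinarith [mul_le_mul_of_nonneg_right h1 hn.le]

/-- The blocks `[v*n+1, (v+1)*n]` for `v = 0, …, j-1` cover `[1, j*n]`. -/
lemma union_blocks (j : ℕ) (n : ℤ) (hn : 0 < n) :
    (univ : Finset (Fin j)).biUnion
      (fun v => Icc ((v:ℤ)*n+1) (((v:ℤ)+1)*n)) = Icc 1 ((j:ℤ)*n) := by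
  ext x
  simp only [mem_biUnion, mem_univ, true_and, mem_Icc]
  constructor
  · rintro ⟨v, h1, h2⟩
    have hv0 : (0:ℤ) ≤ (v:ℤ) := Int.natCast_nonneg _
    have hv1 : (v:ℤ) + 1 ≤ (j:ℤ) := by exact_mod_cast v.isLt
    constructor
    · nlinarith
    · nlinarith
  · rintro ⟨h1, h2⟩
    have hj0 : 0 < j := by
      by_contra h
      have : (j:ℤ) = 0 := by omega
      rw [this] at h2; nlinarith
    set q := (x-1)/n with hq
    have h0 : 0 ≤ q := Int.ediv_nonneg (by omega) hn.le
    have hmod := Int.mul_ediv_add_emod (x-1) n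
    have hm0 : 0 ≤ (x-1) % n := Int.emod_nonneg _ (by omega)
    have hm1 : (x-1) % n < n := Int.emod_lt_of_pos _ hn
    have hltj : q < (j:ℤ) := by
      rw [hq]
      rw [Int.ediv_lt_iff_lt_mul hn]
      nlinarith
    refine ⟨⟨q.toNat, by omega⟩, ?_, ?_⟩ <;>
      · simp only [Fin.val_mk]
        rw [Int.toNat_of_nonneg h0]
        nlinarith

/-- Base case: `{1, …, 2mj}` splits into `j` sets of `2m` integers with equal sums. -/
lemma prouhet_base (j m : ℕ) (hj : 2 ≤ j) (hm : 1 ≤ m) :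
    ∃ A : Fin j → Finset ℤ,
      (∀ v w : Fin j, v ≠ w → Disjoint (A v) (A w)) ∧
      (univ.biUnion A = Icc 1 (2 * (m:ℤ) * (j:ℤ))) ∧
      (∀ r : ℕ, r ≤ 1 → ∀ v w : Fin j, ∑ x ∈ A v, x ^ r = ∑ x ∈ A w, x ^ r) := by
  set M : ℤ := (m:ℤ) with hM
  set J : ℤ := (j:ℤ) with hJ
  have hM0 : 0 < M := by rw [hM]; exact_mod_cast hm
  have hJ2 : (2:ℤ) ≤ J := by rw [hJ]; exact_mod_cast hj
  set c : ℤ := 2 * M * J + 1 with hc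
  set I : Fin j → Finset ℤ := fun v => Icc ((v:ℤ)*M+1) (((v:ℤ)+1)*M) with hI
  set A : Fin j → Finset ℤ := fun v => I v ∪ (I v).image (fun x => c - x) with hA
  have hIunion : (univ : Finset (Fin j)).biUnion I = Icc 1 (J*M) :=
    union_blocks j M hM0
  have hIsub : ∀ v, I v ⊆ Icc 1 (J*M) := by
    intro v
    rw [← hIunion]
    exact subset_biUnion_of_mem I (mem_univ v)
  have hlow : ∀ v, ∀ x ∈ I v, 1 ≤ x ∧ x ≤ J*M := by
    intro v x hx
    have := hIsub v hx
    rw [mem_Icc] at this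
    exact this
  -- image part lands in the upper half
  have hhigh : ∀ v, ∀ y ∈ (I v).image (fun x => c - x), J*M + 1 ≤ y ∧ y ≤ 2*M*J := by
    intro v y hy
    rw [mem_image] at hy
    obtain ⟨x, hx, rfl⟩ := hy
    obtain ⟨h1, h2⟩ := hlow v x hx
    constructor <;> [nlinarith; nlinarith]
  have hIdisj : ∀ v w : Fin j, v ≠ w → Disjoint (I v) (I w) := by
    intro v w hvw
    rw [Finset.disjoint_left]
    intro x hxv hxw
    rw [hI, mem_Icc] at hxv hxw
    have : (v:ℤ) = (w:ℤ) := block_unique hM0 hxv.1 hxv.2 hxw.1 hxw.2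
    exact hvw (Fin.ext (by exact_mod_cast this))
  have hAdisj : ∀ v w : Fin j, v ≠ w → Disjoint (A v) (A w) := by
    intro v w hvw
    rw [Finset.disjoint_left]
    intro x hxv hxw
    rw [hA] at hxv hxw
    simp only [mem_union] at hxv hxw
    rcases hxv with hxv | hxv <;> rcases hxw with hxw | hxw
    · exact (Finset.disjoint_left.mp (hIdisj v w hvw)) hxv hxw
    · have := (hlow v x hxv).2; have := (hhigh w x hxw).1; omega
    · have := (hlow w x hxw).2; have := (hhigh v x hxv).1; omega
    · rw [mem_image] at hxv hxw
      obtain ⟨a, ha, hax⟩ := hxv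
      obtain ⟨b, hb, hbx⟩ := hxw
      have hab : a = b := by omega
      subst hab
      exact (Finset.disjoint_left.mp (hIdisj v w hvw)) ha hb
  have hselfdisj : ∀ v, Disjoint (I v) ((I v).image (fun x => c - x)) := by
    intro v
    rw [Finset.disjoint_left]
    intro x hx hx'
    have := (hlow v x hx).2
    have := (hhigh v x hx').1
    omega
  refine ⟨A, hAdisj, ?_, ?_⟩
  · -- union
    have : (univ : Finset (Fin j)).biUnion A =
        ((univ : Finset (Fin j)).biUnion I) ∪
          ((univ : Finset (Fin j)).biUnion I).image (fun x => c - x) := by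
      rw [hA]
      ext x
      simp only [mem_biUnion, mem_union, mem_univ, true_and, mem_image]
      constructor
      · rintro ⟨v, hv | hv⟩
        · exact Or.inl ⟨v, hv⟩
        · obtain ⟨a, ha, rfl⟩ := hv
          exact Or.inr ⟨a, ⟨v, ha⟩, rfl⟩
      · rintro (⟨v, hv⟩ | ⟨a, ⟨v, ha⟩, rfl⟩)
        · exact ⟨v, Or.inl hv⟩
        · exact ⟨v, Or.inr ⟨a, ha, rfl⟩⟩
    rw [this, hIunion]
    ext x
    simp only [mem_union, mem_Icc, mem_image]
    constructor
    · rintro (⟨h1, h2⟩ | ⟨a, ⟨ha1, ha2⟩, rfl⟩)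
      · constructor <;> nlinarith
      · constructor <;> nlinarith
    · rintro ⟨h1, h2⟩
      by_cases h : x ≤ J*M
      · exact Or.inl ⟨h1, h⟩
      · refine Or.inr ⟨c - x, ⟨by nlinarith, by nlinarith⟩, by ring⟩
  · -- sums
    intro r hr v w
    have hcard : ∀ u : Fin j, (I u).card = m := by
      intro u
      rw [hI]
      rw [Int.card_Icc]
      have : ((u:ℤ)+1)*M + 1 - ((u:ℤ)*M+1) = M := by ring
      rw [this, hM]
      exact Int.toNat_natCast m
    have key : ∀ u : Fin j, ∑ x ∈ A u, x ^ r =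
        ∑ a ∈ I u, (a ^ r + (c - a) ^ r) := by
      intro u
      rw [hA]
      rw [Finset.sum_union (hselfdisj u)]
      rw [Finset.sum_image (by intro a _ b _ h; have h' : c - a = c - b := h; omega)]
      rw [← Finset.sum_add_distrib]
    rw [key v, key w]
    interval_cases r
    · simp [hcard]
    · have hc' : ∀ a : ℤ, a ^ 1 + (c - a) ^ 1 = c := by intro a; ring
      calc ∑ a ∈ I v, (a ^ 1 + (c - a) ^ 1) = ∑ a ∈ I v, c := by
            refine Finset.sum_congr rfl fun a _ => hc' a
        _ = (m : ℤ) * c := by rw [Finset.sum_const, hcard]; simp [mul_comm]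
        _ = ∑ a ∈ I w, c := by rw [Finset.sum_const, hcard]; simp [mul_comm]
        _ = ∑ a ∈ I w, (a ^ 1 + (c - a) ^ 1) := by
            refine Finset.sum_congr rfl fun a _ => (hc' a).symm

/-- Inductive step: from a degree-`k` partition of `{1, …, n}` build a degree-`k+1`
partition of `{1, …, jn}` by cyclically shifting the classes across `j` blocks. -/
lemma prouhet_step (j : ℕ) (hj : 2 ≤ j) (n : ℤ) (hn : 0 < n) (k : ℕ)
    (A : Fin j → Finset ℤ)
    (hd : ∀ v w : Fin j, v ≠ w → Disjoint (A v) (A w))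
    (hu : univ.biUnion A = Icc 1 n)
    (hs : ∀ r : ℕ, r ≤ k → ∀ v w : Fin j, ∑ x ∈ A v, x ^ r = ∑ x ∈ A w, x ^ r) :
    ∃ B : Fin j → Finset ℤ,
      (∀ v w : Fin j, v ≠ w → Disjoint (B v) (B w)) ∧
      (univ.biUnion B = Icc 1 ((j:ℤ) * n)) ∧
      (∀ r : ℕ, r ≤ k + 1 → ∀ v w : Fin j, ∑ x ∈ B v, x ^ r = ∑ x ∈ B w, x ^ r) := by
  haveI : NeZero j := ⟨by omega⟩
  set B : Fin j → Finset ℤ :=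
    fun v => univ.biUnion (fun t : Fin j => (A (v + t)).image (fun x => x + (t:ℤ) * n))
    with hB
  have hAsub : ∀ u : Fin j, ∀ x ∈ A u, 1 ≤ x ∧ x ≤ n := by
    intro u x hx
    have : x ∈ (univ : Finset (Fin j)).biUnion A :=
      mem_biUnion.mpr ⟨u, mem_univ u, hx⟩
    rw [hu, mem_Icc] at this
    exact this
  have hblk : ∀ u t : Fin j, ∀ y ∈ (A u).image (fun x => x + (t:ℤ) * n),
      (t:ℤ) * n + 1 ≤ y ∧ y ≤ ((t:ℤ) + 1) * n := by
    intro u t y hy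
    rw [mem_image] at hy
    obtain ⟨x, hx, rfl⟩ := hy
    obtain ⟨h1, h2⟩ := hAsub u x hx
    constructor <;> nlinarith
  -- disjointness
  have hBdisj : ∀ v w : Fin j, v ≠ w → Disjoint (B v) (B w) := by
    intro v w hvw
    rw [Finset.disjoint_left]
    intro y hyv hyw
    rw [hB] at hyv hyw
    rw [mem_biUnion] at hyv hyw
    obtain ⟨t, -, hyv⟩ := hyv
    obtain ⟨t', -, hyw⟩ := hyw
    have h1 := hblk (v + t) t y hyv
    have h2 := hblk (w + t') t' y hyw
    have htt : (t:ℤ) = (t':ℤ) := block_unique hn h1.1 h1.2 h2.1 h2.2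
    have htt' : t = t' := Fin.ext (by exact_mod_cast htt)
    subst htt'
    rw [mem_image] at hyv hyw
    obtain ⟨a, ha, hay⟩ := hyv
    obtain ⟨b, hb, hby⟩ := hyw
    have hab : a = b := by omega
    subst hab
    have hne : v + t ≠ w + t := fun h => hvw (by
      have := congrArg (fun z => z - t) h
      simpa using this)
    exact (Finset.disjoint_left.mp (hd _ _ hne)) ha hb
  -- union
  have hBunion : univ.biUnion B = Icc 1 ((j:ℤ) * n) := by
    rw [← union_blocks j n hn]
    ext y
    simp only [hB, mem_biUnion, mem_univ, true_and, mem_image, mem_Icc]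
    constructor
    · rintro ⟨v, t, a, ha, rfl⟩
      exact ⟨t, (hblk (v + t) t _ (mem_image_of_mem _ ha)).1,
        (hblk (v + t) t _ (mem_image_of_mem _ ha)).2⟩
    · rintro ⟨t, h1, h2⟩
      have hy : y - (t:ℤ) * n ∈ Icc (1:ℤ) n := by
        rw [mem_Icc]; constructor <;> nlinarith
      rw [← hu, mem_biUnion] at hy
      obtain ⟨u, -, hu'⟩ := hy
      exact ⟨u - t, t, y - (t:ℤ) * n, by rwa [sub_add_cancel], by ring⟩
  refine ⟨B, hBdisj, hBunion, ?_⟩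
  -- sums
  intro r hr v w
  set S : ℕ → ℤ := fun i => ∑ x ∈ A 0, x ^ i with hS
  have hexp : ∀ (u : Fin j) (c : ℤ), ∑ a ∈ A u, (a + c) ^ r =
      (∑ a ∈ A u, a ^ r) + ∑ i ∈ range r, S i * c ^ (r - i) * (r.choose i : ℤ) := by
    intro u c
    calc ∑ a ∈ A u, (a + c) ^ r
        = ∑ a ∈ A u, ∑ i ∈ range (r + 1), a ^ i * c ^ (r - i) * (r.choose i : ℤ) :=
          Finset.sum_congr rfl fun a _ => add_pow a c r
      _ = ∑ i ∈ range (r + 1), ∑ a ∈ A u, a ^ i * c ^ (r - i) * (r.choose i : ℤ) :=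
          Finset.sum_comm
      _ = ∑ i ∈ range (r + 1), (∑ a ∈ A u, a ^ i) * c ^ (r - i) * (r.choose i : ℤ) := by
          refine Finset.sum_congr rfl fun i _ => ?_
          rw [Finset.sum_mul, Finset.sum_mul]
      _ = (∑ a ∈ A u, a ^ r) + ∑ i ∈ range r, S i * c ^ (r - i) * (r.choose i : ℤ) := by
          have h1 : ∑ i ∈ range r, (∑ a ∈ A u, a ^ i) * c ^ (r - i) * (r.choose i : ℤ)
              = ∑ i ∈ range r, S i * c ^ (r - i) * (r.choose i : ℤ) := by
            refine Finset.sum_congr rfl fun i hi => ?_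
            rw [mem_range] at hi
            rw [hs i (by omega) u 0]
          have h2 : (∑ a ∈ A u, a ^ r) * c ^ (r - r) * (r.choose r : ℤ)
              = ∑ a ∈ A u, a ^ r := by simp
          rw [Finset.sum_range_succ, h1, h2, add_comm]
  have hsum_piece : ∀ u : Fin j, ∑ y ∈ B u, y ^ r =
      ∑ t : Fin j, ((∑ a ∈ A (u + t), a ^ r)
        + ∑ i ∈ range r, S i * ((t:ℤ) * n) ^ (r - i) * (r.choose i : ℤ)) := by
    intro u
    rw [hB]
    rw [Finset.sum_biUnion ?hdisj]
    case hdisj =>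
      intro t ht t' ht' htt'
      rw [Function.onFun, Finset.disjoint_left]
      intro y hy hy'
      have h1 := hblk (u + t) t y hy
      have h2 := hblk (u + t') t' y hy'
      have : (t:ℤ) = (t':ℤ) := block_unique hn h1.1 h1.2 h2.1 h2.2
      exact htt' (Fin.ext (by exact_mod_cast this))
    refine Finset.sum_congr rfl fun t _ => ?_
    rw [Finset.sum_image (by intro a _ b _ h; have h' : a + (t:ℤ) * n = b + (t:ℤ) * n := h; omega)]
    exact hexp (u + t) ((t:ℤ) * n)
  have hshift : ∀ u : Fin j, ∑ t : Fin j, ∑ a ∈ A (u + t), a ^ r =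
      ∑ t : Fin j, ∑ a ∈ A t, a ^ r := by
    intro u
    exact Fintype.sum_equiv (Equiv.addLeft u) _ _ (fun t => rfl)
  rw [hsum_piece v, hsum_piece w, Finset.sum_add_distrib, Finset.sum_add_distrib,
    hshift v, hshift w]

lemma prouhet_main (j m : ℕ) (hj : 2 ≤ j) (hm : 1 ≤ m) :
    ∀ k : ℕ, 1 ≤ k → ∃ A : Fin j → Finset ℤ,
      (∀ v w : Fin j, v ≠ w → Disjoint (A v) (A w)) ∧
      (univ.biUnion A = Icc 1 (2 * (m:ℤ) * (j:ℤ) ^ k)) ∧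
      (∀ r : ℕ, r ≤ k → ∀ v w : Fin j, ∑ x ∈ A v, x ^ r = ∑ x ∈ A w, x ^ r) := by
  intro k
  induction k with
  | zero => omega
  | succ k ih =>
    intro _
    by_cases hk : 1 ≤ k
    · obtain ⟨A, hd, hu, hs⟩ := ih hk
      have hn : 0 < 2 * (m:ℤ) * (j:ℤ) ^ k := by
        have hm' : (0:ℤ) < (m:ℤ) := by exact_mod_cast hm
        have hj' : (0:ℤ) < (j:ℤ) := by exact_mod_cast (by omega : 0 < j)
        positivity
      obtain ⟨B, h1, h2, h3⟩ := prouhet_step j hj _ hn k A hd hu hs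
      refine ⟨B, h1, ?_, h3⟩
      rw [h2]
      congr 1
      ring
    · have hk0 : k = 0 := by omega
      subst hk0
      obtain ⟨A, h1, h2, h3⟩ := prouhet_base j m hj hm
      refine ⟨A, h1, ?_, h3⟩
      rw [h2]
      norm_num

/-- **Theorem 7 (existence part).** For integers `j ≥ 2`, `m ≥ 1` and `k ≥ 1`, with
`N = 2 * m * j ^ k`, the integers `1, 2, …, N` can be partitioned into `j` pairwise
disjoint sets of `2 * m * j ^ (k - 1)` integers each, such that for every exponent
`r = 1, …, k` the sums of the `r`-th powers of the members of the `j` sets all agree. -/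
theorem first_two_m_j_pow_k_integers_multigrade_partition
    (j m k : ℕ) (hj : 2 ≤ j) (hm : 1 ≤ m) (hk : 1 ≤ k) :
    ∃ A : Fin j → Finset ℤ,
      (∀ v w : Fin j, v ≠ w → Disjoint (A v) (A w)) ∧
      (∀ v : Fin j, (A v).card = 2 * m * j ^ (k - 1)) ∧
      (Finset.univ.biUnion A = Finset.Icc (1 : ℤ) (2 * (m : ℤ) * (j : ℤ) ^ k)) ∧
      (∀ r : ℕ, 1 ≤ r → r ≤ k → ∀ v w : Fin j,
        ∑ x ∈ A v, x ^ r = ∑ x ∈ A w, x ^ r) := by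
  haveI : NeZero j := ⟨by omega⟩
  obtain ⟨A, hd, hu, hs⟩ := prouhet_main j m hj hm k hk
  refine ⟨A, hd, ?_, hu, fun r _ hr v w => hs r hr v w⟩
  -- cardinalities
  have hceq : ∀ v : Fin j, (A v).card = (A 0).card := by
    intro v
    have h := hs 0 (by omega) v 0
    simp only [pow_zero, Finset.sum_const, nsmul_eq_mul, mul_one] at h
    exact_mod_cast h
  have htot : ∑ v : Fin j, (A v).card = 2 * m * j ^ k := by
    rw [← Finset.card_biUnion (fun v _ w _ hvw => hd v w hvw), hu, Int.card_Icc]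
    have : 2 * (m:ℤ) * (j:ℤ) ^ k + 1 - 1 = ((2 * m * j ^ k : ℕ) : ℤ) := by
      push_cast; ring
    rw [this, Int.toNat_natCast]
  have hjtot : j * (A 0).card = 2 * m * j ^ k := by
    rw [← htot]
    rw [Finset.sum_congr rfl (fun v _ => hceq v)]
    simp [Finset.sum_const, Finset.card_univ, mul_comm]
  intro v
  rw [hceq v]
  have hpow : j ^ k = j * j ^ (k - 1) := by
    conv_lhs => rw [show k = 1 + (k - 1) by omega]
    rw [pow_add, pow_one]
  have : j * (A 0).card = j * (2 * m * j ^ (k - 1)) := by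
    rw [hjtot, hpow]; ring
  exact Nat.eq_of_mul_eq_mul_left (by omega) this
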